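/- Suppose V is infinite-dimensional. Then there exists a bijection φ : 𝒢 → 𝒢 such that for all X, Y ∈ 𝒢, X and Y are adjacent if and only if φ(X) and φ(Y) are adjacent (so φ is an automorphism of the Grassmann graph), but there exist P, Q ∈ 𝒢 with V = P ⊕ Q for which φ(P) and φ(Q) are not complementary (so φ is not an automorphism of the distant graph). -/

import Mathlib

open Submodule

/-- `X` belongs to the Grassmannian 𝒢: `X` is isomorphic (as a `K`-vector space)
to the quotient `V ⧸ X`, equivalently to one (hence every) complement of `X`. -/
def InG (K V : Type*) [DivisionRing K] [AddCommGroup V] [Module K V]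
    (X : Submodule K V) : Prop :=
  Nonempty (X ≃ₗ[K] (V ⧸ X))

/-- `quotRank K V A B` is the dimension of the quotient space `B / (A ∩ B)`,
where `A ∩ B` is viewed as a subspace of `B`.  For `A ≤ B` this is `dim (B/A)`. -/
noncomputable def quotRank (K V : Type*) [DivisionRing K] [AddCommGroup V] [Module K V]
    (A B : Submodule K V) : Cardinal :=
  Module.rank K (↥B ⧸ (A.comap B.subtype))

/-- `X` and `Y` are adjacent: `dim ((X+Y)/X) = dim ((X+Y)/Y) = 1`. -/
def Adjacent (K V : Type*) [DivisionRing K] [AddCommGroup V] [Module K V]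
    (X Y : Submodule K V) : Prop :=
  quotRank K V X (X ⊔ Y) = 1 ∧ quotRank K V Y (X ⊔ Y) = 1

/-- The distant graph on 𝒢: vertices are the elements of 𝒢, edges the pairs of
(distinct) complementary subspaces. -/
def distantGraph (K V : Type*) [DivisionRing K] [AddCommGroup V] [Module K V] :
    SimpleGraph {X : Submodule K V // InG K V X} where
  Adj X Y := X ≠ Y ∧ IsCompl X.1 Y.1
  symm := ⟨fun _ _ h => ⟨h.1.symm, h.2.symm⟩⟩
  loopless := ⟨fun _ h => h.1 rfl⟩

/-- The Grassmann graph on 𝒢: vertices are the elements of 𝒢, edges the pairs of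
adjacent subspaces. -/
def grassmannGraph (K V : Type*) [DivisionRing K] [AddCommGroup V] [Module K V] :
    SimpleGraph {X : Submodule K V // InG K V X} where
  Adj X Y := Adjacent K V X.1 Y.1
  symm := by
    constructor
    intro X Y h
    obtain ⟨h1, h2⟩ := h
    refine ⟨?_, ?_⟩ <;> rw [sup_comm]
    exacts [h2, h1]
  loopless := by
    constructor
    intro X h
    obtain ⟨h1, -⟩ := h
    rw [quotRank, sup_idem, comap_subtype_self] at h1
    have : Subsingleton (↥X.1 ⧸ (⊤ : Submodule K ↥X.1)) :=
      Submodule.Quotient.subsingleton_iff.mpr rfl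
    rw [rank_subsingleton'] at h1
    exact zero_ne_one h1

section Aux

open Cardinal

variable {K : Type*} [DivisionRing K]

/-- core: `B ⧸ (A ∩ B)` has the same rank as the image of `B` in `M ⧸ A`. -/
lemma rank_quot_comap_eq {M : Type*} [AddCommGroup M] [Module K M] (A B : Submodule K M) :
    Module.rank K (↥B ⧸ (A.comap B.subtype)) = Module.rank K ↥(B.map A.mkQ) := by
  have e := (A.mkQ ∘ₗ B.subtype).quotKerEquivRange
  rw [LinearMap.ker_comp, Submodule.ker_mkQ, LinearMap.range_comp,
    Submodule.range_subtype] at e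
  exact e.rank_eq

lemma quotRank_eq_rank_map {V : Type*} [AddCommGroup V] [Module K V] (A B : Submodule K V) :
    quotRank K V A B = Module.rank K ↥(B.map A.mkQ) :=
  rank_quot_comap_eq A B

lemma adjacent_iff {V : Type*} [AddCommGroup V] [Module K V] (X Y : Submodule K V) :
    Adjacent K V X Y ↔
      Module.rank K ↥(Y.map X.mkQ) = 1 ∧ Module.rank K ↥(X.map Y.mkQ) = 1 := by
  unfold Adjacent
  rw [quotRank_eq_rank_map, quotRank_eq_rank_map, Submodule.map_sup, Submodule.map_sup,
    Submodule.mkQ_map_self, Submodule.mkQ_map_self, bot_sup_eq, sup_bot_eq]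

lemma rank_le_rank_map_mkQ_add {M : Type*} [AddCommGroup M] [Module K M]
    (p q : Submodule K M) :
    Module.rank K ↥q ≤ Module.rank K ↥(q.map p.mkQ) + Module.rank K ↥p := by
  have h1 := Submodule.rank_quotient_add_rank (p.comap q.subtype)
  have h2 := rank_quot_comap_eq p q
  have h3 : Module.rank K ↥(p.comap q.subtype) ≤ Module.rank K ↥p := by
    have hc : p.comap q.subtype = (p ⊓ q).comap q.subtype := by
      ext x; simp [x.2]
    rw [hc]
    calc Module.rank K ↥((p ⊓ q).comap q.subtype)
        = Module.rank K ↥(p ⊓ q) :=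
          (Submodule.comapSubtypeEquivOfLe inf_le_right).rank_eq
      _ ≤ Module.rank K ↥p := Submodule.rank_mono inf_le_left
  calc Module.rank K ↥q = _ + _ := h1.symm
    _ ≤ Module.rank K ↥(q.map p.mkQ) + Module.rank K ↥p := by
        rw [h2]; exact add_le_add le_rfl h3

lemma fq_trans {V : Type*} [AddCommGroup V] [Module K V] {X Y Z : Submodule K V}
    (h1 : Module.rank K ↥(Y.map X.mkQ) < ℵ₀) (h2 : Module.rank K ↥(Z.map Y.mkQ) < ℵ₀) :
    Module.rank K ↥(Z.map X.mkQ) < ℵ₀ := by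
  set p := Y.map X.mkQ with hp
  have hY : Y ≤ LinearMap.ker (p.mkQ ∘ₗ X.mkQ) := by
    intro y hy
    simp only [LinearMap.mem_ker, LinearMap.comp_apply, Submodule.mkQ_apply,
      Submodule.Quotient.mk_eq_zero]
    exact Submodule.mem_map_of_mem hy
  have hcomp : (Y.liftQ (p.mkQ ∘ₗ X.mkQ) hY) ∘ₗ Y.mkQ = p.mkQ ∘ₗ X.mkQ :=
    Y.liftQ_mkQ _ _
  have heq : (Z.map X.mkQ).map p.mkQ = (Z.map Y.mkQ).map (Y.liftQ (p.mkQ ∘ₗ X.mkQ) hY) := by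
    rw [← Submodule.map_comp, ← Submodule.map_comp, hcomp]
  calc Module.rank K ↥(Z.map X.mkQ)
      ≤ Module.rank K ↥((Z.map X.mkQ).map p.mkQ) + Module.rank K ↥p :=
        rank_le_rank_map_mkQ_add p (Z.map X.mkQ)
    _ < ℵ₀ := by
        rw [heq]
        exact Cardinal.add_lt_aleph0 (lt_of_le_of_lt (rank_map_le _ _) h2) h1

lemma rank_map_map_equiv {V : Type*} [AddCommGroup V] [Module K V]
    (g : V ≃ₗ[K] V) (X Y : Submodule K V) :
    Module.rank K ↥((Y.map (g : V →ₗ[K] V)).map (X.map (g : V →ₗ[K] V)).mkQ)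
      = Module.rank K ↥(Y.map X.mkQ) := by
  set X' := X.map (g : V →ₗ[K] V) with hX'
  let qe : (V ⧸ X) ≃ₗ[K] (V ⧸ X') := Submodule.Quotient.equiv X X' g rfl
  have hcomp : (qe : (V ⧸ X) →ₗ[K] (V ⧸ X')) ∘ₗ X.mkQ = X'.mkQ ∘ₗ (g : V →ₗ[K] V) := by
    ext v
    simp [qe, Submodule.Quotient.equiv, Submodule.mapQ_apply]
  have heq : (Y.map (g : V →ₗ[K] V)).map X'.mkQ
      = (Y.map X.mkQ).map (qe : (V ⧸ X) →ₗ[K] (V ⧸ X')) := by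
    rw [← Submodule.map_comp, ← Submodule.map_comp, hcomp]
  rw [heq]
  exact ((qe.submoduleMap (Y.map X.mkQ)).rank_eq).symm

lemma InG.map_equiv {V : Type*} [AddCommGroup V] [Module K V] {X : Submodule K V}
    (h : InG K V X) (g : V ≃ₗ[K] V) : InG K V (X.map (g : V →ₗ[K] V)) := by
  obtain ⟨e⟩ := h
  exact ⟨((g.submoduleMap X).symm.trans e).trans (Submodule.Quotient.equiv X _ g rfl)⟩

lemma aleph0_le_rank_map_mkQ {V : Type*} [AddCommGroup V] [Module K V]
    {W S T : Submodule K V} (hd : Disjoint W S)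
    (hS : ℵ₀ ≤ Module.rank K ↥S) (hST : S ≤ T) :
    ℵ₀ ≤ Module.rank K ↥(T.map W.mkQ) := by
  have hker : LinearMap.ker (W.mkQ ∘ₗ S.subtype) = ⊥ := by
    rw [LinearMap.ker_comp, Submodule.ker_mkQ]
    ext x
    simp only [Submodule.mem_comap, Submodule.coe_subtype, Submodule.mem_bot]
    constructor
    · intro hx
      exact Subtype.ext (Submodule.disjoint_def.mp hd x hx x.2)
    · rintro rfl; simp
  have hinj : Function.Injective (W.mkQ ∘ₗ S.subtype) := LinearMap.ker_eq_bot.mp hker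
  have e := LinearEquiv.ofInjective (W.mkQ ∘ₗ S.subtype) hinj
  rw [LinearMap.range_comp, Submodule.range_subtype] at e
  calc ℵ₀ ≤ Module.rank K ↥S := hS
    _ = Module.rank K ↥(S.map W.mkQ) := e.rank_eq
    _ ≤ Module.rank K ↥(T.map W.mkQ) := Submodule.rank_mono (Submodule.map_mono hST)

end Aux

set_option maxHeartbeats 1000000

/-- For `V` infinite-dimensional there is an automorphism of the Grassmann graph
on 𝒢 which is not an automorphism of the distant graph: it maps some pair of
complementary elements of 𝒢 to a non-complementary pair. -/
theorem stmt_19 (K V : Type*) [DivisionRing K] [AddCommGroup V] [Module K V]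
    (hV : ¬ FiniteDimensional K V) :
    ∃ φ : {X : Submodule K V // InG K V X} → {X : Submodule K V // InG K V X},
      Function.Bijective φ ∧
      (∀ X Y : {X : Submodule K V // InG K V X},
        Adjacent K V X.1 Y.1 ↔ Adjacent K V (φ X).1 (φ Y).1) ∧
      ∃ P Q : {X : Submodule K V // InG K V X},
        IsCompl P.1 Q.1 ∧ ¬ IsCompl (φ P).1 (φ Q).1 := by
  classical
  set ι := Module.Basis.ofVectorSpaceIndex K V with hιdef
  let b0 : Module.Basis ι K V := Module.Basis.ofVectorSpace K V
  have hinf : Infinite ι := by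
    by_contra h
    rw [not_infinite_iff_finite] at h
    haveI := Fintype.ofFinite ι
    exact hV (Module.Finite.of_basis b0)
  have hcard : Cardinal.mk (ι ⊕ ι) = Cardinal.mk ι := by
    rw [Cardinal.mk_sum]
    simp [Cardinal.add_eq_self (Cardinal.aleph0_le_mk ι)]
  obtain ⟨j⟩ := Cardinal.eq.mp hcard
  let b : Module.Basis (ι ⊕ (ι ⊕ ι)) K V :=
    b0.reindex (j.symm.trans (Equiv.sumCongr (Equiv.refl ι) j.symm))
  let v : ι ⊕ (ι ⊕ ι) → V := ⇑b
  have hli : LinearIndependent K v := b.linearIndependent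
  have hvinj : Function.Injective v := b.injective
  have hliP : LinearIndependent K (v ∘ Sum.inl) := hli.comp _ Sum.inl_injective
  have hliQ : LinearIndependent K (v ∘ Sum.inr) := hli.comp _ Sum.inr_injective
  have hliQ' : LinearIndependent K (v ∘ (Sum.inr ∘ Sum.inl)) :=
    hli.comp _ (Sum.inr_injective.comp Sum.inl_injective)
  let P : Submodule K V := span K (Set.range (v ∘ Sum.inl))
  let Q : Submodule K V := span K (Set.range (v ∘ Sum.inr))
  let Q' : Submodule K V := span K (Set.range (v ∘ (Sum.inr ∘ Sum.inl)))
  let R2 : Submodule K V := span K (Set.range (v ∘ (Sum.inr ∘ Sum.inr)))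
  -- complementarity of P and Q
  have hPQ : IsCompl P Q := by
    constructor
    · simp only [P, Q, Set.range_comp]
      exact hli.disjoint_span_image Set.isCompl_range_inl_range_inr.disjoint
    · rw [codisjoint_iff]
      simp only [P, Q, Set.range_comp]
      rw [← Submodule.span_union, ← Set.image_union, Set.range_inl_union_range_inr,
        Set.image_univ]
      exact b.span_eq
  have hPQ'd : Disjoint P Q' := by
    simp only [P, Q', Set.range_comp]
    exact hli.disjoint_span_image
      (Set.isCompl_range_inl_range_inr.disjoint.mono_right
        (Set.image_subset_range _ _))
  have hQ'R2d : Disjoint Q' R2 := by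
    simp only [Q', R2, Set.range_comp]
    refine hli.disjoint_span_image ?_
    rw [Set.disjoint_left]
    rintro x ⟨a, ⟨a1, rfl⟩, rfl⟩ ⟨u, ⟨u1, rfl⟩, hu⟩
    simp at hu
  have hR2Q : R2 ≤ Q :=
    Submodule.span_mono (by rintro x ⟨a, rfl⟩; exact ⟨Sum.inr a, rfl⟩)
  -- ranks
  have hrankQ : Cardinal.aleph0 ≤ Module.rank K ↥Q := by
    have hq : Module.rank K ↥Q = Cardinal.mk (Set.range (v ∘ Sum.inr)) := rank_span hliQ
    rw [hq]
    exact Cardinal.infinite_iff.mp (Set.infinite_coe_iff.mpr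
      (Set.infinite_range_of_injective (hvinj.comp Sum.inr_injective)))
  have hrankQ' : Cardinal.aleph0 ≤ Module.rank K ↥Q' := by
    have hq : Module.rank K ↥Q' = Cardinal.mk (Set.range (v ∘ (Sum.inr ∘ Sum.inl))) :=
      rank_span hliQ'
    rw [hq]
    exact Cardinal.infinite_iff.mp (Set.infinite_coe_iff.mpr
      (Set.infinite_range_of_injective (hvinj.comp (Sum.inr_injective.comp Sum.inl_injective))))
  have hrankR2 : Cardinal.aleph0 ≤ Module.rank K ↥R2 := by
    have hq : Module.rank K ↥R2 = Cardinal.mk (Set.range (v ∘ (Sum.inr ∘ Sum.inr))) :=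
      rank_span (hli.comp _ (Sum.inr_injective.comp Sum.inr_injective))
    rw [hq]
    exact Cardinal.infinite_iff.mp (Set.infinite_coe_iff.mpr
      (Set.infinite_range_of_injective (hvinj.comp (Sum.inr_injective.comp Sum.inr_injective))))
  -- membership in 𝒢
  let bP : Module.Basis ι K ↥P := Module.Basis.span hliP
  let bQ : Module.Basis (ι ⊕ ι) K ↥Q := Module.Basis.span hliQ
  have hInGP : InG K V P :=
    ⟨(bP.equiv bQ j.symm).trans (Submodule.quotientEquivOfIsCompl P Q hPQ).symm⟩
  have hInGQ : InG K V Q :=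
    ⟨(bQ.equiv bP j).trans (Submodule.quotientEquivOfIsCompl Q P hPQ.symm).symm⟩
  -- the automorphism g with g(Q) = Q'
  let e : (ι ⊕ (ι ⊕ ι)) ≃ (ι ⊕ (ι ⊕ ι)) := (Equiv.sumCongr j.symm j).trans
    ((Equiv.sumAssoc ι ι ι).trans (Equiv.sumCongr (Equiv.refl ι) (Equiv.sumComm ι ι)))
  let g : V ≃ₗ[K] V := b.equiv b e
  have hgb : ∀ i, g (b i) = b (e i) := fun i => b.equiv_apply i b e
  have he : ∀ z : ι ⊕ ι, e (Sum.inr z) = Sum.inr (Sum.inl (j z)) := fun z => rfl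
  have hgQ : Q.map (g : V →ₗ[K] V) = Q' := by
    simp only [Q, Q']
    rw [Submodule.map_span]
    congr 1
    ext x
    constructor
    · rintro ⟨-, ⟨z, rfl⟩, rfl⟩
      exact ⟨j z, by simp [v, hgb, he]⟩
    · rintro ⟨w, rfl⟩
      refine ⟨v (Sum.inr (j.symm w)), ⟨j.symm w, rfl⟩, ?_⟩
      simp [v, hgb, he]
  have hgg : ∀ A : Submodule K V,
      (A.map (g : V →ₗ[K] V)).map (g.symm : V →ₗ[K] V) = A := by
    intro A
    rw [← Submodule.map_comp, LinearEquiv.comp_coe, LinearEquiv.self_trans_symm]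
    simp
  have hgg' : ∀ A : Submodule K V,
      (A.map (g.symm : V →ₗ[K] V)).map (g : V →ₗ[K] V) = A := by
    intro A
    rw [← Submodule.map_comp, LinearEquiv.comp_coe, LinearEquiv.symm_trans_self]
    simp
  have hQ'g : Q'.map (g.symm : V →ₗ[K] V) = Q := by rw [← hgQ, hgg]
  -- the commensurability predicate
  let F : Submodule K V → Submodule K V → Prop := fun A B =>
    Module.rank K ↥(B.map A.mkQ) < Cardinal.aleph0 ∧
      Module.rank K ↥(A.map B.mkQ) < Cardinal.aleph0
  have Fsymm : ∀ {A B}, F A B → F B A := fun h => ⟨h.2, h.1⟩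
  have Ftrans : ∀ {A B C}, F A B → F B C → F A C := fun h1 h2 =>
    ⟨fq_trans h1.1 h2.1, fq_trans h2.2 h1.2⟩
  have hFmap : ∀ (h : V ≃ₗ[K] V) (A B : Submodule K V),
      F (A.map (h : V →ₗ[K] V)) (B.map (h : V →ₗ[K] V)) ↔ F A B := by
    intro h A B
    simp only [F]
    rw [rank_map_map_equiv, rank_map_map_equiv]
  have hAdjMap : ∀ (h : V ≃ₗ[K] V) (A B : Submodule K V),
      Adjacent K V (A.map (h : V →ₗ[K] V)) (B.map (h : V →ₗ[K] V)) ↔ Adjacent K V A B := by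
    intro h A B
    rw [adjacent_iff, adjacent_iff, rank_map_map_equiv, rank_map_map_equiv]
  -- incommensurability facts
  have hnFPQ : ¬ F P Q := fun h =>
    absurd h.1 (not_lt.mpr (aleph0_le_rank_map_mkQ hPQ.disjoint hrankQ le_rfl))
  have hnFPQ' : ¬ F P Q' := fun h =>
    absurd h.1 (not_lt.mpr (aleph0_le_rank_map_mkQ hPQ'd hrankQ' le_rfl))
  have hnFQQ' : ¬ F Q Q' := fun h =>
    absurd h.2 (not_lt.mpr (aleph0_le_rank_map_mkQ hQ'R2d hrankR2 hR2Q))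
  have hx1 : ∀ A, F A Q → ¬ F A Q' := fun A h h' => hnFQQ' (Ftrans (Fsymm h) h')
  have hx2 : ∀ A, F A Q' → ¬ F A Q := fun A h h' => hnFQQ' (Ftrans (Fsymm h') h)
  have hAiff : ∀ X : Submodule K V, F (X.map (g : V →ₗ[K] V)) Q' ↔ F X Q := fun X => by
    rw [← hgQ]; exact hFmap g X Q
  have hBiff : ∀ X : Submodule K V, F (X.map (g.symm : V →ₗ[K] V)) Q ↔ F X Q' := fun X => by
    rw [← hQ'g]; exact hFmap g.symm X Q'
  -- the map φ and its inverse ψ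
  let φ : {X : Submodule K V // InG K V X} → {X : Submodule K V // InG K V X} := fun X =>
    if F X.1 Q then ⟨X.1.map (g : V →ₗ[K] V), X.2.map_equiv g⟩
    else if F X.1 Q' then ⟨X.1.map (g.symm : V →ₗ[K] V), X.2.map_equiv g.symm⟩
    else X
  let ψ : {X : Submodule K V // InG K V X} → {X : Submodule K V // InG K V X} := fun X =>
    if F X.1 Q' then ⟨X.1.map (g.symm : V →ₗ[K] V), X.2.map_equiv g.symm⟩
    else if F X.1 Q then ⟨X.1.map (g : V →ₗ[K] V), X.2.map_equiv g⟩
    else X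
  have hφ1 : ∀ X, F X.1 Q → (φ X).1 = X.1.map (g : V →ₗ[K] V) := by
    intro X h; simp only [φ]; rw [if_pos h]
  have hφ2 : ∀ X, ¬ F X.1 Q → F X.1 Q' → (φ X).1 = X.1.map (g.symm : V →ₗ[K] V) := by
    intro X h1 h2; simp only [φ]; rw [if_neg h1, if_pos h2]
  have hφ3 : ∀ X, ¬ F X.1 Q → ¬ F X.1 Q' → φ X = X := by
    intro X h1 h2; simp only [φ]; rw [if_neg h1, if_neg h2]
  have hψ1 : ∀ X, F X.1 Q' → (ψ X).1 = X.1.map (g.symm : V →ₗ[K] V) := by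
    intro X h; simp only [ψ]; rw [if_pos h]
  have hψ2 : ∀ X, ¬ F X.1 Q' → F X.1 Q → (ψ X).1 = X.1.map (g : V →ₗ[K] V) := by
    intro X h1 h2; simp only [ψ]; rw [if_neg h1, if_pos h2]
  have hψ3 : ∀ X, ¬ F X.1 Q' → ¬ F X.1 Q → ψ X = X := by
    intro X h1 h2; simp only [ψ]; rw [if_neg h1, if_neg h2]
  -- ψ is a two-sided inverse of φ
  have hψφ : ∀ X, ψ (φ X) = X := by
    intro X
    by_cases c1 : F X.1 Q
    · have hv : (φ X).1 = X.1.map (g : V →ₗ[K] V) := hφ1 X c1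
      have b1 : F (φ X).1 Q' := by rw [hv]; exact (hAiff X.1).mpr c1
      apply Subtype.ext
      rw [hψ1 _ b1, hv, hgg]
    · by_cases c2 : F X.1 Q'
      · have hv : (φ X).1 = X.1.map (g.symm : V →ₗ[K] V) := hφ2 X c1 c2
        have b2 : F (φ X).1 Q := by rw [hv]; exact (hBiff X.1).mpr c2
        have b1 : ¬ F (φ X).1 Q' := hx1 _ b2
        apply Subtype.ext
        rw [hψ2 _ b1 b2, hv, hgg']
      · rw [hφ3 X c1 c2]
        exact hψ3 X c2 c1
  have hφψ : ∀ X, φ (ψ X) = X := by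
    intro X
    by_cases c1 : F X.1 Q'
    · have hv : (ψ X).1 = X.1.map (g.symm : V →ₗ[K] V) := hψ1 X c1
      have b1 : F (ψ X).1 Q := by rw [hv]; exact (hBiff X.1).mpr c1
      apply Subtype.ext
      rw [hφ1 _ b1, hv, hgg']
    · by_cases c2 : F X.1 Q
      · have hv : (ψ X).1 = X.1.map (g : V →ₗ[K] V) := hψ2 X c1 c2
        have b2 : F (ψ X).1 Q' := by rw [hv]; exact (hAiff X.1).mpr c2
        have b1 : ¬ F (ψ X).1 Q := hx2 _ b2
        apply Subtype.ext
        rw [hφ2 _ b1 b2, hv, hgg]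
      · rw [hψ3 X c1 c2]
        exact hφ3 X c2 c1
  -- φ preserves adjacency
  have hFadj : ∀ X Y : Submodule K V, Adjacent K V X Y → F X Y := by
    intro X Y hadj
    obtain ⟨h1, h2⟩ := (adjacent_iff X Y).mp hadj
    exact ⟨by rw [h1]; exact Cardinal.one_lt_aleph0, by rw [h2]; exact Cardinal.one_lt_aleph0⟩
  have hAdjφ : ∀ X Y, Adjacent K V X.1 Y.1 → Adjacent K V (φ X).1 (φ Y).1 := by
    intro X Y hadj
    have hFxy : F X.1 Y.1 := hFadj _ _ hadj
    by_cases c1 : F X.1 Q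
    · have cY : F Y.1 Q := Ftrans (Fsymm hFxy) c1
      rw [hφ1 X c1, hφ1 Y cY]
      exact (hAdjMap g X.1 Y.1).mpr hadj
    · by_cases c2 : F X.1 Q'
      · have cY2 : F Y.1 Q' := Ftrans (Fsymm hFxy) c2
        have cY1 : ¬ F Y.1 Q := hx2 _ cY2
        rw [hφ2 X c1 c2, hφ2 Y cY1 cY2]
        exact (hAdjMap g.symm X.1 Y.1).mpr hadj
      · have cY1 : ¬ F Y.1 Q := fun h => c1 (Ftrans hFxy h)
        have cY2 : ¬ F Y.1 Q' := fun h => c2 (Ftrans hFxy h)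
        rw [hφ3 X c1 c2, hφ3 Y cY1 cY2]
        exact hadj
  have hAdjψ : ∀ X Y, Adjacent K V X.1 Y.1 → Adjacent K V (ψ X).1 (ψ Y).1 := by
    intro X Y hadj
    have hFxy : F X.1 Y.1 := hFadj _ _ hadj
    by_cases c1 : F X.1 Q'
    · have cY : F Y.1 Q' := Ftrans (Fsymm hFxy) c1
      rw [hψ1 X c1, hψ1 Y cY]
      exact (hAdjMap g.symm X.1 Y.1).mpr hadj
    · by_cases c2 : F X.1 Q
      · have cY2 : F Y.1 Q := Ftrans (Fsymm hFxy) c2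
        have cY1 : ¬ F Y.1 Q' := hx1 _ cY2
        rw [hψ2 X c1 c2, hψ2 Y cY1 cY2]
        exact (hAdjMap g X.1 Y.1).mpr hadj
      · have cY1 : ¬ F Y.1 Q' := fun h => c1 (Ftrans hFxy h)
        have cY2 : ¬ F Y.1 Q := fun h => c2 (Ftrans hFxy h)
        rw [hψ3 X c1 c2, hψ3 Y cY1 cY2]
        exact hadj
  -- ¬ IsCompl P Q'
  have hnotCompl : ¬ IsCompl P Q' := by
    intro h
    have i0 : ι := Classical.arbitrary ι
    have hmemtop : v (Sum.inr (Sum.inr i0)) ∈ P ⊔ Q' := by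
      rw [codisjoint_iff.mp h.codisjoint]; exact Submodule.mem_top
    have hsup : P ⊔ Q' = span K (v '' (Set.range Sum.inl ∪ Set.range (Sum.inr ∘ Sum.inl))) := by
      simp only [P, Q', Set.range_comp]
      rw [← Submodule.span_union, ← Set.image_union]
    rw [hsup] at hmemtop
    refine hli.notMem_span_image ?_ hmemtop
    rintro (⟨a, ha⟩ | ⟨a, ha⟩) <;> simp [Function.comp] at ha
  -- conclusion
  refine ⟨φ, Function.bijective_iff_has_inverse.mpr ⟨ψ, hψφ, hφψ⟩, ?_, ?_⟩
  · intro X Y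
    constructor
    · exact hAdjφ X Y
    · intro h
      have h2 := hAdjψ (φ X) (φ Y) h
      rwa [hψφ, hψφ] at h2
  · refine ⟨⟨P, hInGP⟩, ⟨Q, hInGQ⟩, hPQ, ?_⟩
    have h1 : (φ ⟨P, hInGP⟩).1 = P := congrArg Subtype.val (hφ3 ⟨P, hInGP⟩ hnFPQ hnFPQ')
    have hFQQ : F Q Q := by
      have hb : Module.rank K ↥(Q.map Q.mkQ) < Cardinal.aleph0 := by
        rw [Submodule.mkQ_map_self]
        simpa using Cardinal.aleph0_pos
      exact ⟨hb, hb⟩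
    have h2 : (φ ⟨Q, hInGQ⟩).1 = Q' := (hφ1 ⟨Q, hInGQ⟩ hFQQ).trans hgQ
    rw [h1, h2]
    exact hnotCompl
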